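/- For integers m ≥ 2, the density of m-tuples of coprime positive integers equals 1/ζ(m): the number of m-tuples (x₁,…,x_m) with 1 ≤ x_j ≤ n and gcd(x₁,…,x_m) = 1, divided by n^m, tends to 1/ζ(m) as n → ∞. -/

import Mathlib

open Filter Finset ArithmeticFunction
open scoped ArithmeticFunction.Moebius

private lemma sum_div_moeb (k : ℕ) : ∑ d ∈ k.divisors, μ d = if k = 1 then 1 else 0 := by
  have := congrArg (fun f : ArithmeticFunction ℤ => f k) moebius_mul_coe_zeta
  simp only [coe_mul_zeta_apply, one_apply] at this
  exact this

private lemma count_eq (m n : ℕ) (hm : 1 ≤ m) :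
    (((Fintype.piFinset fun _ : Fin m => Finset.Icc 1 n).filter
        fun f : Fin m → ℕ => Finset.univ.gcd f = 1).card : ℤ)
      = ∑ d ∈ Finset.Icc 1 n, μ d * ((n / d : ℕ) : ℤ) ^ m := by
  classical
  rw [Finset.card_filter, Nat.cast_sum]
  simp only [Nat.cast_ite, Nat.cast_one, Nat.cast_zero]
  have key : ∀ f ∈ Fintype.piFinset fun _ : Fin m => Finset.Icc 1 n,
      (if Finset.univ.gcd f = 1 then (1:ℤ) else 0)
        = ∑ d ∈ Finset.Icc 1 n, if d ∣ Finset.univ.gcd f then μ d else 0 := by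
    intro f hf
    simp only [Fintype.mem_piFinset, Finset.mem_Icc] at hf
    have hg0 : Finset.univ.gcd f ≠ 0 := by
      intro h
      have := Finset.gcd_eq_zero_iff.mp h ⟨0, by omega⟩ (Finset.mem_univ _)
      have := (hf ⟨0, by omega⟩).1
      omega
    have hgle : Finset.univ.gcd f ≤ n := by
      have hd := Finset.gcd_dvd (f := f) (Finset.mem_univ (⟨0, by omega⟩ : Fin m))
      exact le_trans (Nat.le_of_dvd (by have := (hf ⟨0, by omega⟩).1; omega) hd)
        (hf ⟨0, by omega⟩).2
    rw [← sum_div_moeb, ← Finset.sum_filter]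
    congr 1
    ext d
    simp only [Nat.mem_divisors, Finset.mem_filter, Finset.mem_Icc]
    constructor
    · rintro ⟨hd, _⟩
      exact ⟨⟨Nat.one_le_iff_ne_zero.mpr (by rintro rfl; exact hg0 (Nat.eq_zero_of_zero_dvd hd)),
        le_trans (Nat.le_of_dvd (Nat.pos_of_ne_zero hg0) hd) hgle⟩, hd⟩
    · rintro ⟨_, hd⟩
      exact ⟨hd, hg0⟩
  rw [Finset.sum_congr rfl key, Finset.sum_comm]
  refine Finset.sum_congr rfl fun d hd => ?_
  simp only [Finset.mem_Icc] at hd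
  rw [← Finset.sum_filter, Finset.sum_const, nsmul_eq_mul, mul_comm]
  congr 1
  have hset : ((Fintype.piFinset fun _ : Fin m => Finset.Icc 1 n).filter
      fun f : Fin m → ℕ => d ∣ Finset.univ.gcd f)
      = Fintype.piFinset fun _ : Fin m => (Finset.Icc 1 n).filter (d ∣ ·) := by
    ext f
    simp [Fintype.mem_piFinset, Finset.dvd_gcd_iff, forall_and]
  rw [hset, Fintype.card_piFinset]
  have hIcc : Finset.Icc 1 n = Finset.Ioc 0 n := Finset.Icc_add_one_left_eq_Ioc 0 n
  rw [hIcc]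
  simp [Nat.Ioc_filter_dvd_card_eq_div]

private lemma ratio_le (n d : ℕ) (hd : 1 ≤ d) :
    ((n / d : ℕ) : ℝ) / n ≤ (d : ℝ)⁻¹ := by
  have hd0 : (0:ℝ) < d := by exact_mod_cast hd
  rcases Nat.eq_zero_or_pos n with rfl | hn
  · simp
  have hn0 : (0:ℝ) < n := by exact_mod_cast hn
  have h1 : ((n / d : ℕ) : ℝ) * d ≤ n := by exact_mod_cast Nat.div_mul_le_self n d
  rw [div_le_iff₀ hn0, inv_mul_eq_div, le_div_iff₀ hd0]
  linarith

private lemma ratio_tendsto (d : ℕ) (hd : 1 ≤ d) :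
    Tendsto (fun n : ℕ => ((n / d : ℕ) : ℝ) / n) atTop (nhds ((d : ℝ)⁻¹)) := by
  have hd0 : (0:ℝ) < d := by exact_mod_cast hd
  have hlo : Tendsto (fun n : ℕ => (d : ℝ)⁻¹ - (n : ℝ)⁻¹) atTop (nhds ((d : ℝ)⁻¹)) := by
    simpa using tendsto_const_nhds.sub (tendsto_inv_atTop_nhds_zero_nat (𝕜 := ℝ))
  refine tendsto_of_tendsto_of_tendsto_of_le_of_le' hlo tendsto_const_nhds ?_ ?_
  · filter_upwards [eventually_ge_atTop 1] with n hn
    have hn0 : (0:ℝ) < n := by exact_mod_cast hn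
    have h2 : (n : ℝ) < d * ((n / d : ℕ) : ℝ) + d := by
      have e1 := Nat.div_add_mod n d
      have e2 := Nat.mod_lt n (show 0 < d by omega)
      exact_mod_cast by omega
    rw [show (d:ℝ)⁻¹ - (n:ℝ)⁻¹ = ((n:ℝ) - d)/(d*n) by field_simp,
      div_le_div_iff₀ (by positivity) hn0]
    nlinarith
  · exact Eventually.of_forall fun n => ratio_le n d hd

/-- Lehmer (1900): for `m ≥ 2`, the density of coprime `m`-tuples of positive
integers is `1 / ζ(m)`. -/
theorem lehmer_coprime_tuples_density (m : ℕ) (hm : 2 ≤ m) :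
    Tendsto (fun n : ℕ =>
        (((Fintype.piFinset fun _ : Fin m => Finset.Icc 1 n).filter
            fun f : Fin m → ℕ => Finset.univ.gcd f = 1).card : ℂ) / (n : ℂ) ^ m)
      atTop (nhds (riemannZeta m)⁻¹) := by
  classical
  set F : ℕ → ℕ → ℂ := fun n d => (μ d : ℂ) * ((n / d : ℕ) : ℂ) ^ m / (n : ℂ) ^ m with hF
  have hm0 : m ≠ 0 := by omega
  -- Step A: rewrite the quotient as a tsum
  have hfun : ∀ n : ℕ,
      (((Fintype.piFinset fun _ : Fin m => Finset.Icc 1 n).filter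
          fun f : Fin m → ℕ => Finset.univ.gcd f = 1).card : ℂ) / (n : ℂ) ^ m
        = ∑' d, F n d := by
    intro n
    have hsupp : ∀ d ∉ Finset.Icc 1 n, F n d = 0 := by
      intro d hd
      simp only [Finset.mem_Icc, not_and_or, not_le] at hd
      have hnd : n / d = 0 := by
        rcases hd with h | h
        · interval_cases d
          exact Nat.div_zero n
        · exact Nat.div_eq_of_lt h
      simp [hF, hnd, zero_pow hm0]
    rw [tsum_eq_sum hsupp, ← Finset.sum_div]
    congr 1
    have hc := count_eq m n (by omega)
    have hc2 := congrArg (fun z : ℤ => (z : ℂ)) hc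
    push_cast at hc2
    exact hc2
  -- Step B: dominated convergence
  have h1re : 1 < ((m : ℂ)).re := by
    simp only [Complex.natCast_re]
    exact_mod_cast by omega
  have hlim : Tendsto (fun n => ∑' d, F n d) atTop
      (nhds (∑' d, LSeries.term (fun k => ((μ k : ℤ) : ℂ)) (m : ℂ) d)) := by
    apply tendsto_tsum_of_dominated_convergence (bound := fun d : ℕ => (((d : ℝ)) ^ m)⁻¹)
    · have := (Real.summable_one_div_nat_pow (p := m)).mpr hm
      simpa [one_div] using this
    · intro d
      rcases eq_or_ne d 0 with rfl | hd
      · simpa [hF] using tendsto_const_nhds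
      · have hr := ratio_tendsto d (Nat.one_le_iff_ne_zero.mpr hd)
        have hc : Tendsto (fun n : ℕ => ((n / d : ℕ) : ℂ) / (n : ℂ)) atTop
            (nhds ((d : ℂ)⁻¹)) := by
          have h2 := (Complex.continuous_ofReal.tendsto _).comp hr
          simp only [Function.comp_def] at h2
          rw [show ((((d : ℝ))⁻¹ : ℝ) : ℂ) = (d : ℂ)⁻¹ by push_cast; ring] at h2
          exact h2.congr fun n => by push_cast; ring
        have h3 : Tendsto (fun n : ℕ => (μ d : ℂ) * (((n / d : ℕ) : ℂ) / (n : ℂ)) ^ m)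
            atTop (nhds ((μ d : ℂ) * ((d : ℂ)⁻¹) ^ m)) :=
          tendsto_const_nhds.mul (hc.pow m)
        have heq1 : (fun n : ℕ => (μ d : ℂ) * (((n / d : ℕ) : ℂ) / (n : ℂ)) ^ m)
            = fun n => F n d := by
          funext n
          simp only [hF, div_pow]
          ring
        have heq2 : (μ d : ℂ) * ((d : ℂ)⁻¹) ^ m
            = LSeries.term (fun k => ((μ k : ℤ) : ℂ)) (m : ℂ) d := by
          rw [LSeries.term_of_ne_zero hd, Complex.cpow_natCast, inv_pow, div_eq_mul_inv]
        rw [heq1, heq2] at h3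
        exact h3
    · refine Eventually.of_forall fun n => fun d => ?_
      rcases eq_or_ne d 0 with rfl | hd
      · simp [hF, zero_pow hm0]
      have hd1 : 1 ≤ d := Nat.one_le_iff_ne_zero.mpr hd
      have hnorm : ‖F n d‖ = ‖(μ d : ℂ)‖ * (((n / d : ℕ) : ℝ) / n) ^ m := by
        simp only [hF, norm_div, norm_mul, norm_pow, Complex.norm_natCast, div_pow]
        ring
      rw [hnorm]
      have hmu : ‖(μ d : ℂ)‖ ≤ 1 := by
        rw [show ((μ d : ℤ) : ℂ) = ((μ d : ℤ) : ℂ) from rfl]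
        rw [Complex.norm_intCast]
        exact_mod_cast abs_moebius_le_one (n := d)
      have hratio : (((n / d : ℕ) : ℝ) / n) ^ m ≤ ((d : ℝ)⁻¹) ^ m := by
        apply pow_le_pow_left₀ (by positivity) (ratio_le n d hd1)
      calc ‖(μ d : ℂ)‖ * (((n / d : ℕ) : ℝ) / n) ^ m
          ≤ 1 * ((d : ℝ)⁻¹) ^ m := by
            apply mul_le_mul hmu hratio (by positivity) zero_le_one
        _ = ((d : ℝ) ^ m)⁻¹ := by rw [one_mul, inv_pow]
  -- Step C: identify the limit
  have hzeta : (∑' d, LSeries.term (fun k => ((μ k : ℤ) : ℂ)) (m : ℂ) d)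
      = (riemannZeta m)⁻¹ := by
    have hmul := LSeries_zeta_mul_Lseries_moebius (s := (m : ℂ)) h1re
    rw [LSeries_zeta_eq_riemannZeta h1re] at hmul
    have : LSeries (fun k => ((μ k : ℤ) : ℂ)) (m : ℂ) = (riemannZeta m)⁻¹ :=
      (inv_eq_of_mul_eq_one_right hmul).symm
    exact this
  rw [← hzeta]
  exact hlim.congr fun n => (hfun n).symm
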